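/- Let E be a Hilbert B-module whose elements separate the points of B, i.e. (∀ x ∈ E, x·b = 0) implies b = 0. Then for every b ∈ B, ‖b‖ = sup over x in the closed unit ball of E of ‖x·b‖. -/

import Mathlib

set_option linter.unusedSectionVars false
set_option maxHeartbeats 1000000

open scoped RightActions

/-- The December 2024 Mathlib `CStarModule` (right `A`-module, i.e. `SMul Aᵐᵒᵖ E`). -/
class CStarModuleRight (A E : Type*) [NonUnitalSemiring A] [StarRing A]
    [Module ℂ A] [AddCommGroup E] [Module ℂ E] [PartialOrder A] [SMul Aᵐᵒᵖ E] [Norm A] [Norm E]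
    extends Inner A E where
  inner_add_right {x} {y} {z} : inner x (y + z) = inner x y + inner x z
  inner_self_nonneg {x} : 0 ≤ inner x x
  inner_self {x} : inner x x = 0 ↔ x = 0
  inner_op_smul_right {a : A} {x y : E} : inner x (y <• a) = inner x y * a
  inner_smul_right_complex {z : ℂ} {x} {y} : inner x (z • y) = z • inner x y
  star_inner x y : star (inner x y) = inner y x
  norm_eq_sqrt_norm_inner_self x : ‖x‖ = √‖inner x x‖

section Aux

variable {B E : Type*}
    [NonUnitalCStarAlgebra B] [PartialOrder B] [StarOrderedRing B]
    [NormedAddCommGroup E] [NormedSpace ℂ E] [SMul Bᵐᵒᵖ E] [CStarModuleRight B E]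

local notation "⟪" x ", " y "⟫" => inner (𝕜 := B) x y

lemma CStarModuleRight.inner_sub_right {x y z : E} : ⟪x, y - z⟫ = ⟪x, y⟫ - ⟪x, z⟫ := by
  have h := CStarModuleRight.inner_add_right (A := B) (x := x) (y := y - z) (z := z)
  rw [sub_add_cancel] at h
  exact eq_sub_of_add_eq h.symm

lemma CStarModuleRight.inner_smul_right_real {r : ℝ} {x y : E} : ⟪x, r • y⟫ = r • ⟪x, y⟫ := by
  rw [← Complex.coe_smul r y, CStarModuleRight.inner_smul_right_complex, Complex.coe_smul]

lemma CStarModuleRight.norm_sq_eq {x : E} : ‖x‖ ^ 2 = ‖⟪x, x⟫‖ := by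
  rw [CStarModuleRight.norm_eq_sqrt_norm_inner_self (A := B) x, Real.sq_sqrt (norm_nonneg _)]

lemma CStarModuleRight.inner_op_smul_left {a : B} {x y : E} : ⟪x <• a, y⟫ = star a * ⟪x, y⟫ := by
  rw [← CStarModuleRight.star_inner y, CStarModuleRight.inner_op_smul_right, star_mul,
    CStarModuleRight.star_inner]

lemma aux_eq_of_inner {z w : E} (h : ∀ v : E, ⟪v, z⟫ = ⟪v, w⟫) : z = w := by
  have h0 : ⟪z - w, z - w⟫ = 0 := by
    rw [CStarModuleRight.inner_sub_right, h (z - w), sub_self]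
  exact sub_eq_zero.mp (CStarModuleRight.inner_self.mp h0)

lemma aux_op_smul_op_smul (x : E) (u v : B) : (x <• u) <• v = x <• (u * v) := by
  apply aux_eq_of_inner (B := B)
  intro w
  rw [CStarModuleRight.inner_op_smul_right, CStarModuleRight.inner_op_smul_right,
    CStarModuleRight.inner_op_smul_right, mul_assoc]

lemma aux_real_smul (r : ℝ) (x : E) (u : B) : (r • x) <• u = r • (x <• u) := by
  apply aux_eq_of_inner (B := B)
  intro w
  rw [CStarModuleRight.inner_op_smul_right, CStarModuleRight.inner_smul_right_real,
    CStarModuleRight.inner_smul_right_real, CStarModuleRight.inner_op_smul_right, smul_mul_assoc]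

lemma aux_norm_sq (x : E) (u : B) : ‖x <• u‖ ^ 2 = ‖star u * ⟪x, x⟫ * u‖ := by
  rw [CStarModuleRight.norm_sq_eq (B := B), CStarModuleRight.inner_op_smul_right, CStarModuleRight.inner_op_smul_left]

lemma aux_norm_le (x : E) (u : B) : ‖x <• u‖ ≤ ‖x‖ * ‖u‖ := by
  have h := aux_norm_sq x u
  have h2 : ‖star u * ⟪x, x⟫ * u‖ ≤ ‖u‖ * ‖⟪x, x⟫‖ * ‖u‖ := by
    calc ‖star u * ⟪x, x⟫ * u‖ ≤ ‖star u * ⟪x, x⟫‖ * ‖u‖ := norm_mul_le _ _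
      _ ≤ ‖star u‖ * ‖⟪x, x⟫‖ * ‖u‖ := by gcongr; exact norm_mul_le _ _
      _ = ‖u‖ * ‖⟪x, x⟫‖ * ‖u‖ := by rw [norm_star]
  have h3 : ‖⟪x, x⟫‖ = ‖x‖ ^ 2 := (CStarModuleRight.norm_sq_eq (B := B)).symm
  have hsq : ‖x <• u‖ ^ 2 ≤ (‖x‖ * ‖u‖) ^ 2 := by
    rw [h3] at h2
    rw [h]
    calc ‖star u * ⟪x, x⟫ * u‖ ≤ ‖u‖ * ‖x‖ ^ 2 * ‖u‖ := h2
      _ = (‖x‖ * ‖u‖) ^ 2 := by ring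
  have h4 : 0 ≤ ‖x <• u‖ + ‖x‖ * ‖u‖ := by positivity
  nlinarith [norm_nonneg (x <• u), mul_nonneg (norm_nonneg x) (norm_nonneg u)]

end Aux

theorem stmt7 {B E : Type*}
    [NonUnitalCStarAlgebra B] [PartialOrder B] [StarOrderedRing B]
    [NormedAddCommGroup E] [NormedSpace ℂ E] [SMul Bᵐᵒᵖ E] [CStarModuleRight B E]
    [CompleteSpace E]
    (hsep : ∀ b : B, (∀ x : E, x <• b = 0) → b = 0) :
    ∀ b : B, ‖b‖ = ⨆ x : {x : E // ‖x‖ ≤ 1}, ‖(x : E) <• b‖ := by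
  intro b
  have hne : Nonempty {x : E // ‖x‖ ≤ 1} := ⟨⟨0, by simp⟩⟩
  set s := ⨆ x : {x : E // ‖x‖ ≤ 1}, ‖(x : E) <• b‖ with hs_def
  have hbd : ∀ x : {x : E // ‖x‖ ≤ 1}, ‖(x : E) <• b‖ ≤ ‖b‖ := by
    intro x
    calc ‖(x : E) <• b‖ ≤ ‖(x : E)‖ * ‖b‖ := aux_norm_le _ _
      _ ≤ 1 * ‖b‖ := by
          have := x.2
          have := norm_nonneg b
          nlinarith [norm_nonneg (x : E)]
      _ = ‖b‖ := one_mul _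
  have hbdd : BddAbove (Set.range fun x : {x : E // ‖x‖ ≤ 1} => ‖(x : E) <• b‖) := by
    refine ⟨‖b‖, ?_⟩
    rintro - ⟨x, rfl⟩
    exact hbd x
  have hle : s ≤ ‖b‖ := ciSup_le hbd
  have hs0 : 0 ≤ s := le_trans (norm_nonneg _) (le_ciSup hbdd ⟨0, by simp⟩)
  have key : ∀ z : E, ‖z <• b‖ ≤ s * ‖z‖ := by
    intro z
    rcases eq_or_ne z 0 with rfl | hz
    · calc ‖(0 : E) <• b‖ ≤ ‖(0 : E)‖ * ‖b‖ := aux_norm_le _ _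
        _ = s * ‖(0 : E)‖ := by simp
    · have hz' : 0 < ‖z‖ := norm_pos_iff.mpr hz
      have hxnorm : ‖(‖z‖⁻¹ • z : E)‖ = 1 := by
        rw [norm_smul, norm_inv, norm_norm]
        field_simp
      have h1 : ‖((‖z‖⁻¹ • z : E)) <• b‖ ≤ s := le_ciSup hbdd ⟨_, hxnorm.le⟩
      rw [aux_real_smul, norm_smul, norm_inv, norm_norm] at h1
      have h2 : ‖z‖⁻¹ * ‖z <• b‖ ≤ s := h1
      calc ‖z <• b‖ = ‖z‖ * (‖z‖⁻¹ * ‖z <• b‖) := by field_simp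
        _ ≤ ‖z‖ * s := by nlinarith
        _ = s * ‖z‖ := mul_comm _ _
  refine le_antisymm ?_ hle
  by_contra hlt
  push_neg at hlt
  -- hlt : s < ‖b‖
  set c := b * star b with hc_def
  have hc : (0 : B) ≤ c := mul_star_self_nonneg b
  have hc_sa : IsSelfAdjoint c := hc.isSelfAdjoint
  have hcnorm : ‖c‖ = ‖b‖ ^ 2 := by rw [hc_def, CStarRing.norm_self_mul_star, sq]
  set r := (s ^ 2 + ‖b‖ ^ 2) / 2 with hr_def
  have hb0 : 0 ≤ ‖b‖ := norm_nonneg b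
  have hsb : s ^ 2 < ‖b‖ ^ 2 := by nlinarith
  have hr1 : s ^ 2 < r := by rw [hr_def]; linarith
  have hr2 : r < ‖b‖ ^ 2 := by rw [hr_def]; linarith
  have hr0 : 0 < r := lt_of_le_of_lt (sq_nonneg s) hr1
  set g : ℝ → ℝ := fun t => max (t - r) 0 with hg_def
  have hgcont : Continuous g := (continuous_id.sub continuous_const).max continuous_const
  have hg0 : g 0 = 0 := by
    simp only [hg_def]
    rw [max_eq_right (by linarith)]
  have hgnn : ∀ t, 0 ≤ g t := fun t => le_max_right _ _
  set e := cfcₙ g c with he_def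
  have he0 : (0 : B) ≤ e := cfcₙ_nonneg fun t _ => hgnn t
  have he_sa : IsSelfAdjoint e := he0.isSelfAdjoint
  -- the key inequality r • (e * e) ≤ e * c * e
  have hkey : r • (e * e) ≤ e * c * e := by
    have h1 : e * (c * e) = cfcₙ (fun t => g t * (t * g t)) c := by
      rw [cfcₙ_mul g (fun t => t * g t) c (hgcont.continuousOn) hg0
        ((continuous_id.mul hgcont).continuousOn) (by simp),
        cfcₙ_mul (fun t => t) g c ((continuous_id (X := ℝ)).continuousOn) (by simp)
        (hgcont.continuousOn) hg0, cfcₙ_id' ℝ c]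
    have h2 : r • (e * e) = cfcₙ (fun t => r • (g t * g t)) c := by
      rw [cfcₙ_smul r (fun t => g t * g t) c ((hgcont.mul hgcont).continuousOn) (by simp [hg0]),
        cfcₙ_mul g g c (hgcont.continuousOn) hg0 (hgcont.continuousOn) hg0]
    rw [show e * c * e = e * (c * e) from mul_assoc .., h1, h2]
    apply cfcₙ_mono
    · intro t _
      rcases le_or_gt t r with h | h
      · have : g t = 0 := by
          simp only [hg_def]
          rw [max_eq_right (by linarith)]
        simp [this]
      · have hgt : g t = t - r := by
          simp only [hg_def]
          rw [max_eq_left (by linarith)]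
        rw [hgt]
        have h0' : (0 : ℝ) ≤ t - r := by linarith
        simp only [smul_eq_mul]
        nlinarith [mul_nonneg (mul_nonneg h0' h0') h0']
    · exact ((hgcont.mul hgcont).const_smul r).continuousOn
    · exact (hgcont.mul (continuous_id.mul hgcont)).continuousOn
    · simp [hg0]
    · simp [hg0]
  -- every x ∈ E is killed by e
  have hx0 : ∀ x : E, x <• e = 0 := by
    intro x
    set a := inner (𝕜 := B) x x with ha_def
    have ha : (0 : B) ≤ a := CStarModuleRight.inner_self_nonneg
    set y := CFC.sqrt a with hy_def
    have hy : y * y = a := CFC.sqrt_mul_sqrt_self a ha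
    have hy_sa : IsSelfAdjoint y := (CFC.sqrt_nonneg (a := a)).isSelfAdjoint
    have hm : ‖x <• e‖ ^ 2 = ‖y * e‖ ^ 2 := by
      rw [aux_norm_sq, ← ha_def]
      have h : star e * a * e = star (y * e) * (y * e) := by
        simp [star_mul, hy_sa.star_eq, he_sa.star_eq, mul_assoc, ← hy]
      rw [h, CStarRing.norm_star_mul_self, sq]
    have ht : ‖(x <• e) <• b‖ ^ 2 = ‖y * e * b‖ ^ 2 := by
      rw [aux_op_smul_op_smul, aux_norm_sq, ← ha_def]
      have h : star (e * b) * a * (e * b) = star (y * (e * b)) * (y * (e * b)) := by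
        simp [star_mul, hy_sa.star_eq, he_sa.star_eq, mul_assoc, ← hy]
      rw [show star (e * b) * a * (e * b) = star (y * e * b) * (y * e * b) by
        rw [h]; rw [mul_assoc y e b], CStarRing.norm_star_mul_self, sq]
    have hconj : r • (y * (e * e) * y) ≤ y * (e * c * e) * y := by
      have h := star_left_conjugate_le_conjugate hkey y
      rw [hy_sa.star_eq] at h
      calc r • (y * (e * e) * y) = y * r • (e * e) * y := by
            rw [mul_smul_comm, smul_mul_assoc]
        _ ≤ y * (e * c * e) * y := h
    have hnn : (0 : B) ≤ r • (y * (e * e) * y) := by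
      have h : y * (e * e) * y = star (e * y) * (e * y) := by
        simp [star_mul, hy_sa.star_eq, he_sa.star_eq, mul_assoc]
      rw [h]
      exact smul_nonneg hr0.le (star_mul_self_nonneg _)
    have hnorm_le : ‖r • (y * (e * e) * y)‖ ≤ ‖y * (e * c * e) * y‖ :=
      CStarAlgebra.norm_le_norm_of_nonneg_of_le hnn hconj
    have hL : ‖r • (y * (e * e) * y)‖ = r * ‖y * e‖ ^ 2 := by
      rw [norm_smul, Real.norm_eq_abs, abs_of_pos hr0]
      congr 1
      have h : y * (e * e) * y = (y * e) * star (y * e) := by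
        simp [star_mul, hy_sa.star_eq, he_sa.star_eq, mul_assoc]
      rw [h, CStarRing.norm_self_mul_star, sq]
    have hR : ‖y * (e * c * e) * y‖ = ‖y * e * b‖ ^ 2 := by
      have h : y * (e * c * e) * y = (y * e * b) * star (y * e * b) := by
        simp [hc_def, star_mul, hy_sa.star_eq, he_sa.star_eq, mul_assoc]
      rw [h, CStarRing.norm_self_mul_star, sq]
    have hsmall : ‖(x <• e) <• b‖ ≤ s * ‖x <• e‖ := key _
    rw [hL, hR] at hnorm_le
    -- hnorm_le : r * ‖y*e‖² ≤ ‖y*e*b‖²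
    have hsq : ‖x <• e‖ ^ 2 ≤ 0 := by
      nlinarith [norm_nonneg (x <• e), norm_nonneg ((x <• e) <• b),
        mul_nonneg hs0 (norm_nonneg (x <• e))]
    have hfin : ‖x <• e‖ ^ 2 = 0 := le_antisymm hsq (sq_nonneg _)
    exact norm_eq_zero.mp (pow_eq_zero_iff two_ne_zero |>.mp hfin)
  have he_zero : e = 0 := hsep e hx0
  -- but e ≠ 0 : ‖b‖² ∈ quasispectrum of c, and g (‖b‖²) > 0
  have hmem : ‖b‖ ^ 2 ∈ quasispectrum ℝ c := by
    have h2 : (0 : Unitization ℂ B) ≤ (c : Unitization ℂ B) :=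
      Unitization.inr_nonneg_iff.mpr hc
    have h3 : ‖(c : Unitization ℂ B)‖ ∈ spectrum ℝ ((c : Unitization ℂ B)) :=
      CStarAlgebra.norm_mem_spectrum_of_nonneg h2
    rw [Unitization.norm_inr, hcnorm] at h3
    rw [Unitization.quasispectrum_eq_spectrum_inr' ℝ ℂ c]
    exact h3
  have hmem2 : g (‖b‖ ^ 2) ∈ quasispectrum ℝ e := by
    rw [he_def, cfcₙ_map_quasispectrum g c (hgcont.continuousOn) hg0 hc_sa]
    exact ⟨_, hmem, rfl⟩
  rw [he_zero, CFC.quasispectrum_zero_eq] at hmem2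
  have : g (‖b‖ ^ 2) = 0 := hmem2
  have : ‖b‖ ^ 2 - r ≤ 0 := by
    by_contra hpos
    push_neg at hpos
    rw [show g (‖b‖ ^ 2) = max (‖b‖ ^ 2 - r) 0 from rfl, max_eq_left hpos.le] at this
    linarith
  linarith
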